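/- arXiv:1410.0953 — 3 statements merged into one kernel-verified Lean document; each statement's English description precedes it below -/
import Mathlib

section
/- Define ℓ^{∞∞}(ℤ) to be the set of bounded functions φ : ℤ → ℂ such that for every ultrafilter U on ℤ and every natural number d, the limit along U of n^d (φ(n) − lim_U φ) is 0. Then ℓ^{∞∞}(ℤ) is closed under pointwise multiplication. -/
open Filter

/-- A projection: a `{0,1}`-valued function. -/
def IsProj (p : ℤ → ℂ) : Prop := ∀ n, p n = 0 ∨ p n = 1

/-- Schwartz functions on `ℤ`: all moments `sup_n |n|^k |φ(n)|` are finite. -/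
def IsSchwartz (φ : ℤ → ℂ) : Prop :=
  ∀ k : ℕ, ∃ C : ℝ, ∀ n : ℤ, (n.natAbs : ℝ)^k * ‖φ n‖ ≤ C

/-- Membership in `ℓ^{∞∞}(ℤ)`: `φ` is bounded and, for every ultrafilter `U` on
`ℤ` and every `d ∈ ℕ`, `n^d (φ(n) − lim_U φ) → 0` along `U`. -/
def SmoothInf (φ : ℤ → ℂ) : Prop :=
  (∃ C, ∀ n, ‖φ n‖ ≤ C) ∧
  ∀ (U : Ultrafilter ℤ) (d : ℕ) (L : ℂ), Tendsto φ ↑U (nhds L) →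
    Tendsto (fun n : ℤ => (n : ℂ)^d * (φ n - L)) ↑U (nhds 0)

/-- A bounded function converges along every ultrafilter. -/
lemma bounded_tendsto_ultrafilter (φ : ℤ → ℂ) (C : ℝ) (hC : ∀ n, ‖φ n‖ ≤ C)
    (U : Ultrafilter ℤ) : ∃ A : ℂ, Tendsto φ ↑U (nhds A) := by
  have hle : ↑(U.map φ) ≤ 𝓟 (Metric.closedBall (0 : ℂ) C) := by
    simp only [Ultrafilter.coe_map, le_principal_iff, mem_map]
    exact Eventually.of_forall fun n => by
      simpa [Metric.mem_closedBall, dist_eq_norm] using hC n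
  obtain ⟨A, _, hA⟩ := (isCompact_closedBall (0 : ℂ) C).ultrafilter_le_nhds (U.map φ) hle
  exact ⟨A, hA⟩

/-- `ℓ^{∞∞}(ℤ)` is closed under pointwise multiplication. -/
theorem stmt_5 (φ ψ : ℤ → ℂ) (hφ : SmoothInf φ) (hψ : SmoothInf ψ) :
    SmoothInf (fun n => φ n * ψ n) := by
  obtain ⟨⟨C, hC⟩, hφ2⟩ := hφ
  obtain ⟨⟨D, hD⟩, hψ2⟩ := hψ
  constructor
  · refine ⟨C * D, fun n => ?_⟩
    have h0 : (0:ℝ) ≤ ‖φ n‖ := norm_nonneg _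
    calc ‖φ n * ψ n‖ = ‖φ n‖ * ‖ψ n‖ := norm_mul _ _
      _ ≤ C * D := mul_le_mul (hC n) (hD n) (norm_nonneg _) (h0.trans (hC n))
  · intro U d L hL
    obtain ⟨A, hA⟩ := bounded_tendsto_ultrafilter φ C hC U
    obtain ⟨B, hB⟩ := bounded_tendsto_ultrafilter ψ D hD U
    have hAB : Tendsto (fun n => φ n * ψ n) ↑U (nhds (A * B)) := hA.mul hB
    have hLAB : L = A * B := tendsto_nhds_unique hL hAB
    subst hLAB
    have key : ∀ n : ℤ, (n : ℂ)^d * (φ n * ψ n - A * B)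
        = ((n : ℂ)^d * (φ n - A)) * ψ n + A * ((n : ℂ)^d * (ψ n - B)) := by
      intro n; ring
    have h1 : Tendsto (fun n : ℤ => ((n : ℂ)^d * (φ n - A)) * ψ n) ↑U (nhds 0) := by
      have := (hφ2 U d A hA).mul hB
      simpa using this
    have h2 : Tendsto (fun n : ℤ => A * ((n : ℂ)^d * (ψ n - B))) ↑U (nhds 0) := by
      have := (hψ2 U d B hB).const_mul A
      simpa using this
    have := h1.add h2
    simp only [add_zero] at this
    exact this.congr fun n => (key n).symm
end

section
/- The inclusion ℓ^{∞∞}(ℤ) ⊆ ℓ^∞(ℤ) is proper. -/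
open Filter

/-- The inclusion `ℓ^{∞∞}(ℤ) ⊆ ℓ^∞(ℤ)` is proper. -/
theorem stmt_11 : ∃ φ : ℤ → ℂ, (∃ C, ∀ n, ‖φ n‖ ≤ C) ∧ ¬ SmoothInf φ := by
  refine ⟨fun n => ((n : ℂ))⁻¹, ⟨1, ?_⟩, ?_⟩
  · intro n
    rcases eq_or_ne n 0 with h | h
    · simp [h]
    · rw [norm_inv]
      apply inv_le_one_of_one_le₀
      have : (1 : ℝ) ≤ |(n : ℝ)| := by
        rw [← Int.cast_abs]
        exact_mod_cast Int.one_le_abs (by simpa using h)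
      simpa using this
  · rintro ⟨-, h⟩
    set U := Ultrafilter.of (cofinite : Filter ℤ) with hUdef
    have hUle : (↑U : Filter ℤ) ≤ cofinite := Ultrafilter.of_le _
    have hcoe : Tendsto (fun n : ℤ => (n : ℂ)) cofinite (Bornology.cobounded ℂ) := by
      rw [← tendsto_norm_atTop_iff_cobounded]
      have h1 : Tendsto (fun n : ℤ => (n : ℝ)) cofinite (cocompact ℝ) :=
        Int.tendsto_coe_cofinite
      have h2 := tendsto_norm_cocompact_atTop.comp h1
      refine h2.congr fun n => ?_
      simp [Complex.norm_intCast]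
    have hφ : Tendsto (fun n : ℤ => ((n : ℂ))⁻¹) (↑U) (nhds 0) :=
      (tendsto_inv₀_cobounded.comp hcoe).mono_left hUle
    have h0 := h U 1 0 hφ
    have hne : ∀ᶠ n : ℤ in ↑U, (fun _ : ℤ => (1 : ℂ)) n =
        (fun n : ℤ => (n : ℂ)^1 * (((n : ℂ))⁻¹ - 0)) n := by
      filter_upwards [hUle ((eventually_cofinite_ne (0 : ℤ)))] with n hn
      have : (n : ℂ) ≠ 0 := by exact_mod_cast hn
      field_simp
      simp
    have h1 : Tendsto (fun _ : ℤ => (1 : ℂ)) (↑U) (nhds 0) := h0.congr' (hne.mono fun n hn => hn.symm)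
    have := tendsto_const_nhds_iff.mp h1
    exact one_ne_zero this
end

section
/- If φ ∈ ℓ^{∞∞}(ℤ), then φ takes only finitely many values on infinite level sets; that is, the set {c ∈ ℂ : φ⁻¹(c) is infinite} is finite. -/
open Filter

/-- A function in `ℓ^{∞∞}(ℤ)` has only finitely many infinite level sets. -/
theorem stmt_15 (φ : ℤ → ℂ) (hφ : SmoothInf φ) :
    {c : ℂ | (φ ⁻¹' {c}).Infinite}.Finite := by
  by_contra hfin
  rw [← Set.not_infinite, not_not] at hfin
  obtain ⟨C, hC⟩ := hφ.1
  set S := {c : ℂ | (φ ⁻¹' {c}).Infinite} with hS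
  have hSb : S ⊆ Metric.closedBall 0 C := by
    intro x hx
    obtain ⟨n, hn⟩ := hx.nonempty
    simp only [Set.mem_preimage, Set.mem_singleton_iff] at hn
    simpa [Metric.mem_closedBall, dist_zero_right, ← hn] using hC n
  obtain ⟨c, -, hc⟩ := hfin.exists_accPt_of_subset_isCompact
    (isCompact_closedBall (0:ℂ) C) hSb
  -- pick a sequence in S approaching c
  have hseq : ∀ k : ℕ, ∃ x, x ∈ S ∧ x ≠ c ∧ dist x c < 1/(k+1) := by
    intro k
    have hb : Metric.ball c (1/(k+1)) ∈ nhds c :=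
      Metric.ball_mem_nhds _ (by positivity)
    obtain ⟨y, ⟨hy1, hy2⟩, hy3⟩ := (accPt_iff_nhds.mp hc) _ hb
    exact ⟨y, hy2, hy3, hy1⟩
  choose cs hcsS hcsne hcsd using hseq
  -- the witness sets
  set W : ℕ → Set ℤ :=
    fun m => {n : ℤ | ∃ k, m ≤ k ∧ φ n = cs k ∧ (k:ℝ) ≤ |(n:ℝ)| * ‖cs k - c‖} with hW
  have hWanti : Antitone W := by
    intro a b hab n hn
    obtain ⟨k, hk, h1, h2⟩ := hn
    exact ⟨k, hab.trans hk, h1, h2⟩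
  have hWne : ∀ m, (W m).Nonempty := by
    intro m
    have hpos : 0 < ‖cs m - c‖ := by
      simpa [norm_pos_iff, sub_ne_zero] using hcsne m
    have hfin2 : {n : ℤ | |(n:ℝ)| * ‖cs m - c‖ < (m:ℝ)}.Finite := by
      set B : ℝ := (m:ℝ) / ‖cs m - c‖
      apply (Set.finite_Icc (-⌈B⌉) ⌈B⌉).subset
      intro n hn
      simp only [Set.mem_setOf_eq] at hn
      have h1 : |(n:ℝ)| < B := (lt_div_iff₀ hpos).2 (by linarith [hn])
      have h3 : |n| ≤ ⌈B⌉ := by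
        have h2 : ((|n| : ℤ) : ℝ) ≤ B := by push_cast; exact h1.le
        exact_mod_cast h2.trans (Int.le_ceil B)
      rw [Set.mem_Icc]
      constructor <;> [linarith [neg_abs_le n]; linarith [le_abs_self n]]
    obtain ⟨n, hn1, hn2⟩ := ((hcsS m).diff hfin2).nonempty
    simp only [Set.mem_preimage, Set.mem_singleton_iff] at hn1
    exact ⟨n, m, le_refl m, hn1, not_lt.1 hn2⟩
  -- a filter containing all W m
  have hNe : (⨅ m, Filter.principal (W m)).NeBot := by
    apply iInf_neBot_of_directed'
    · intro a b
      exact ⟨max a b, principal_mono.2 (hWanti (le_max_left a b)),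
        principal_mono.2 (hWanti (le_max_right a b))⟩
    · intro m
      exact Filter.principal_neBot_iff.2 (hWne m)
  set U : Ultrafilter ℤ := @Ultrafilter.of ℤ (⨅ m, Filter.principal (W m)) hNe with hU
  have hWU : ∀ m, W m ∈ U := by
    intro m
    exact (@Ultrafilter.of_le ℤ _ hNe)
      (Filter.mem_iInf_of_mem m (Filter.mem_principal_self (W m)))
  -- φ tends to c along U
  have htend : Tendsto φ ↑U (nhds c) := by
    rw [Metric.tendsto_nhds]
    intro ε hε
    obtain ⟨m, hm⟩ := exists_nat_one_div_lt hε
    filter_upwards [hWU m] with n hn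
    obtain ⟨k, hk, h1, h2⟩ := hn
    have : dist (cs k) c < 1/(k+1) := hcsd k
    have hmk : (m:ℝ) ≤ k := Nat.cast_le.mpr hk
    have hle : (1:ℝ)/(k+1) ≤ 1/(m+1) :=
      one_div_le_one_div_of_le (by positivity) (by linarith)
    rw [h1]
    linarith
  have h0 := hφ.2 U 1 c htend
  rw [Metric.tendsto_nhds] at h0
  have hsmall := h0 1 one_pos
  have hbig : W 1 ∈ (U : Filter ℤ) := hWU 1
  obtain ⟨n, hn1, hn2⟩ := Filter.nonempty_of_mem (Filter.inter_mem hsmall hbig)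
  simp only [Set.mem_setOf_eq, dist_zero_right] at hn1
  obtain ⟨k, hk, h1, h2⟩ := hn2
  have hnorm : ‖(n : ℂ)^1 * (φ n - c)‖ = |(n:ℝ)| * ‖cs k - c‖ := by
    rw [h1, pow_one, norm_mul]
    congr 1
    simpa using Complex.abs_intCast n
  rw [hnorm] at hn1
  have : (1:ℝ) ≤ (k:ℝ) := by exact_mod_cast hk
  linarith
end
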